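/- Suppose a nonnegative absolutely continuous function f on [0,1] satisfies f(t) ≤ K·(f'(t))² for almost every t ∈ [t₀, 1] where f > 0 on (t₀,1], f(t₀) = 0, and K > 0. Then √(f(1)) ≥ (1 − t₀)/(2√K). -/

import Mathlib

open MeasureTheory

/-- If a nonnegative absolutely continuous nondecreasing function `f` on
`[0,1]` satisfies `f ≤ K·(f')²` a.e. on `[t₀,1]`, where `t₀ = inf{t : f(t) > 0}`,
`f(t₀) = 0`, `f > 0` on `(t₀,1]` and `K > 0`, then `√(f 1) ≥ (1 − t₀)/(2√K)`.
(Absolute continuity is encoded by the fundamental theorem of calculus for `f`.) -/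
theorem stmt1 (f : ℝ → ℝ) (K : ℝ) (hK : 0 < K)
    (hf0 : ∀ t ∈ Set.Icc (0 : ℝ) 1, 0 ≤ f t)
    (hmono : MonotoneOn f (Set.Icc (0 : ℝ) 1))
    (hf1 : 0 < f 1)
    (t₀ : ℝ)
    (ht₀ : t₀ = sInf {t | t ∈ Set.Icc (0 : ℝ) 1 ∧ 0 < f t})
    (ht₀mem : t₀ ∈ Set.Icc (0 : ℝ) 1)
    (hft₀ : f t₀ = 0)
    (hpos : ∀ t ∈ Set.Ioc t₀ 1, 0 < f t)
    (hFTC : ∀ a b : ℝ, t₀ ≤ a → a ≤ b → b ≤ 1 →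
      f b - f a = ∫ t in a..b, deriv f t)
    (hineq : ∀ᵐ t ∂(volume.restrict (Set.Icc t₀ 1)),
      f t ≤ K * (deriv f t) ^ 2) :
    Real.sqrt (f 1) ≥ (1 - t₀) / (2 * Real.sqrt K) := by
  obtain ⟨ht₀0, ht₀1⟩ := ht₀mem
  set sK := Real.sqrt K with hsK
  have hsKpos : 0 < sK := Real.sqrt_pos.mpr hK
  rcases eq_or_lt_of_le ht₀1 with h1 | ht₀lt
  · rw [← h1]
    simp only [sub_self, zero_div, ge_iff_le]
    exact Real.sqrt_nonneg _
  -- deriv f is nonnegative on the open interval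
  have hderiv_nonneg : ∀ x ∈ Set.Ioo (0:ℝ) 1, 0 ≤ deriv f x := by
    intro x hx
    by_cases hd : DifferentiableAt ℝ f x
    · have hda := hd.hasDerivAt
      rw [hasDerivAt_iff_tendsto_slope] at hda
      have h' : Filter.Tendsto (slope f x) (nhdsWithin x (Set.Ioi x)) (nhds (deriv f x)) :=
        hda.mono_left (nhdsWithin_mono x (fun y hy => ne_of_gt hy))
      refine ge_of_tendsto h' ?_
      filter_upwards [Ioo_mem_nhdsGT_of_mem ⟨le_refl x, hx.2⟩] with y hy
      rw [slope_def_field]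
      apply div_nonneg
      · have : f x ≤ f y := hmono ⟨hx.1.le, hx.2.le⟩ ⟨(hx.1.trans hy.1).le, hy.2.le⟩ hy.1.le
        linarith
      · linarith [hy.1]
    · simp [deriv_zero_of_not_differentiableAt hd]
  -- deriv f is interval integrable on [t₀, 1]
  have hInt : IntervalIntegrable (deriv f) volume t₀ 1 := by
    by_contra h
    have h0 := hFTC t₀ 1 le_rfl ht₀1 le_rfl
    rw [intervalIntegral.integral_undef h] at h0
    rw [hft₀] at h0; linarith
  -- f is continuous on [t₀, 1]
  have hcont : ContinuousOn f (Set.Icc t₀ 1) := by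
    have hc : ContinuousOn (fun x => f t₀ + ∫ t in t₀..x, deriv f t) (Set.Icc t₀ 1) := by
      apply ContinuousOn.add continuousOn_const
      have := intervalIntegral.continuousOn_primitive_interval' hInt
        (a := t₀) (by rw [Set.uIcc_of_le ht₀1]; exact Set.left_mem_Icc.mpr ht₀1)
      rwa [Set.uIcc_of_le ht₀1] at this
    apply hc.congr
    intro t ht
    have h0 := hFTC t₀ t le_rfl ht.1 ht.2
    show f t = f t₀ + ∫ s in t₀..t, deriv f s
    linarith
  -- main claim: for every a ∈ (t₀, 1], sqrt (f 1) ≥ (1 - a)/(2 sK)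
  have key : ∀ a ∈ Set.Ioc t₀ 1, (1 - a) / (2 * sK) ≤ Real.sqrt (f 1) := by
    intro a ha
    have hfa : 0 < f a := hpos a ha
    set δ : ℝ := Real.sqrt (f a) / 2 with hδdef
    have hδpos : 0 < δ := by
      have : 0 < Real.sqrt (f a) := Real.sqrt_pos.mpr hfa
      rw [hδdef]; linarith
    have hδsq : δ ^ 2 < f a := by
      have : δ ^ 2 = f a / 4 := by
        rw [hδdef, div_pow, Real.sq_sqrt hfa.le]; ring
      rw [this]; linarith
    set q : ℝ → ℝ := fun t => (δ + (t - a) / (2 * sK)) ^ 2 with hqdef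
    have hqa : q a < f a := by
      simpa [hqdef] using hδsq
    have hP : ∀ t, a ≤ t → 0 ≤ δ + (t - a) / (2 * sK) := by
      intro t hat
      have : 0 ≤ (t - a) / (2 * sK) := div_nonneg (by linarith) (by positivity)
      linarith
    have hqcont : Continuous q := by
      apply Continuous.pow
      exact continuous_const.add ((continuous_id.sub continuous_const).div_const _)
    -- comparison claim
    have claim : ∀ b ∈ Set.Icc a 1, q b ≤ f b := by
      by_contra hc
      push_neg at hc
      obtain ⟨b, hb, hfb⟩ := hc
      have hsub : Set.Icc a b ⊆ Set.Icc t₀ 1 :=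
        Set.Icc_subset_Icc ha.1.le hb.2
      have hsub01 : Set.Icc a b ⊆ Set.Icc (0:ℝ) 1 :=
        hsub.trans (Set.Icc_subset_Icc ht₀0 le_rfl)
      set S := {t | t ∈ Set.Icc a b ∧ f t ≤ q t} with hSdef
      have hSne : S.Nonempty := ⟨b, ⟨hb.1, le_rfl⟩, hfb.le⟩
      have hSbdd : BddBelow S := ⟨a, fun t ht => ht.1.1⟩
      have hSclosed : IsClosed S := by
        have : S = Set.Icc a b ∩ (fun t => f t - q t) ⁻¹' Set.Iic 0 := by
          ext t; simp [hSdef, sub_nonpos]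
        rw [this]
        exact ContinuousOn.preimage_isClosed_of_isClosed
          (((hcont.mono hsub).sub hqcont.continuousOn)) isClosed_Icc isClosed_Iic
      set c := sInf S with hcdef
      have hcS : c ∈ S := hSclosed.csInf_mem hSne hSbdd
      have hac : a < c := by
        rcases lt_or_eq_of_le hcS.1.1 with h | h
        · exact h
        · exfalso; rw [← h] at hcS; linarith [hcS.2, hqa]
      have hc1 : c ≤ 1 := hcS.1.2.trans hb.2
      have hlt : ∀ t, a ≤ t → t < c → q t < f t := by
        intro t hat htc
        by_contra h
        push_neg at h
        have : t ∈ S := ⟨⟨hat, htc.le.trans hcS.1.2⟩, h⟩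
        exact absurd (csInf_le hSbdd this) (not_le.mpr htc)
      -- a.e. t ≠ x for any singleton
      have hae_ne : ∀ x : ℝ, ∀ᵐ t ∂(volume.restrict (Set.Icc a c)), t ≠ x := by
        intro x
        rw [ae_iff]
        have hset : {t : ℝ | ¬ t ≠ x} = {x} := by ext; simp
        rw [hset, Measure.restrict_apply (measurableSet_singleton x)]
        exact le_antisymm ((measure_mono Set.inter_subset_left).trans
          (by simp [Real.volume_singleton])) zero_le
      have hsubac : Set.Icc a c ⊆ Set.Icc t₀ 1 := Set.Icc_subset_Icc ha.1.le hc1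
      -- integrability facts on [a, c]
      have hInt1 : IntervalIntegrable (deriv f) volume a c :=
        hInt.mono_set (by rw [Set.uIcc_of_le hac.le, Set.uIcc_of_le ht₀1]; exact hsubac)
      have hInt2 : IntervalIntegrable (fun t => Real.sqrt (f t) / sK) volume a c := by
        apply ContinuousOn.intervalIntegrable
        rw [Set.uIcc_of_le hac.le]
        exact ((hcont.mono hsubac).sqrt).div_const _
      have hInt3 : IntervalIntegrable (fun t => Real.sqrt (q t) / sK) volume a c :=
        ((hqcont.sqrt).div_const _).continuousOn.intervalIntegrable
      -- step 1: f c - f a = ∫ deriv f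
      have h1 : f c - f a = ∫ t in a..c, deriv f t := hFTC a c ha.1.le hac.le hc1
      -- step 2: ∫ sqrt(f)/sK ≤ ∫ deriv f
      have h2 : (∫ t in a..c, Real.sqrt (f t) / sK) ≤ ∫ t in a..c, deriv f t := by
        apply intervalIntegral.integral_mono_ae_restrict hac.le hInt2 hInt1
        have hineq' : ∀ᵐ t ∂(volume.restrict (Set.Icc a c)),
            f t ≤ K * (deriv f t) ^ 2 :=
          ae_restrict_of_ae_restrict_of_subset hsubac hineq
        filter_upwards [hineq', hae_ne 1, ae_restrict_mem measurableSet_Icc]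
          with t h1t h2t h3t
        have htIoo : t ∈ Set.Ioo (0:ℝ) 1 := by
          constructor
          · linarith [h3t.1, ha.1, ht₀0]
          · rcases lt_or_eq_of_le (h3t.2.trans hc1) with h | h
            · exact h
            · exact absurd h h2t
        have hd0 : 0 ≤ deriv f t := hderiv_nonneg t htIoo
        have : Real.sqrt (f t) ≤ sK * deriv f t := by
          calc Real.sqrt (f t) ≤ Real.sqrt (K * (deriv f t) ^ 2) :=
                Real.sqrt_le_sqrt h1t
            _ = sK * deriv f t := by
                rw [Real.sqrt_mul hK.le, Real.sqrt_sq hd0]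
        rw [div_le_iff₀' hsKpos] -- sqrt (f t) / sK ≤ deriv f t
        exact this
      -- step 3: ∫ sqrt(q)/sK ≤ ∫ sqrt(f)/sK
      have h3 : (∫ t in a..c, Real.sqrt (q t) / sK) ≤ ∫ t in a..c, Real.sqrt (f t) / sK := by
        apply intervalIntegral.integral_mono_ae_restrict hac.le hInt3 hInt2
        filter_upwards [hae_ne c, ae_restrict_mem measurableSet_Icc] with t h2t h3t
        have : q t < f t := hlt t h3t.1 (lt_of_le_of_ne h3t.2 h2t)
        exact div_le_div_iff_of_pos_right hsKpos |>.mpr (Real.sqrt_le_sqrt this.le)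
      -- step 4: the exact integral of sqrt(q)/sK
      have h4 : (∫ t in a..c, Real.sqrt (q t) / sK) = q c - q a := by
        apply intervalIntegral.integral_eq_sub_of_hasDerivAt
        · intro t ht
          rw [Set.uIcc_of_le hac.le] at ht
          have hPt : 0 ≤ δ + (t - a) / (2 * sK) := hP t ht.1
          have hder : HasDerivAt (fun s => δ + (s - a) / (2 * sK)) (1 / (2 * sK)) t := by
            simpa using ((hasDerivAt_id t).sub_const a).div_const (2 * sK) |>.const_add δ
          have := hder.fun_pow 2
          convert this using 1
          · rfl
          rw [hqdef]
          simp only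
          rw [Real.sqrt_sq hPt]
          norm_num
          field_simp
        · exact hInt3
      -- contradiction
      linarith [hcS.2, hqa, h1, h2, h3, h4]
    -- use claim at b = 1
    have hq1 : q 1 ≤ f 1 := claim 1 ⟨ha.2, le_rfl⟩
    have hP1 : 0 ≤ δ + (1 - a) / (2 * sK) := hP 1 ha.2
    have : δ + (1 - a) / (2 * sK) ≤ Real.sqrt (f 1) := by
      have := Real.sqrt_le_sqrt hq1
      rwa [hqdef, Real.sqrt_sq hP1] at this
    linarith
  -- limit a → t₀
  rw [ge_iff_le]
  apply le_of_forall_pos_le_add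
  intro ε hε
  set a := min 1 (t₀ + ε * (2 * sK)) with hadef
  have ha : a ∈ Set.Ioc t₀ 1 := by
    constructor
    · apply lt_min ht₀lt
      have : 0 < ε * (2 * sK) := by positivity
      linarith
    · exact min_le_left _ _
  have h1 := key a ha
  have haub : 1 - a ≥ 1 - t₀ - ε * (2 * sK) := by
    have : a ≤ t₀ + ε * (2 * sK) := min_le_right _ _
    linarith
  have heq : (1 - t₀) / (2 * sK) - ε = (1 - t₀ - ε * (2 * sK)) / (2 * sK) := by
    field_simp
  have : (1 - t₀) / (2 * sK) - ε ≤ (1 - a) / (2 * sK) := by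
    rw [heq]
    exact div_le_div_iff_of_pos_right (by positivity) |>.mpr (by linarith)
  linarith
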